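/- Let Y → X ⊕ Z →g Z → Y[1] be a distinguished triangle in 𝒟 such that the composite of the canonical inclusion Z → X ⊕ Z with g is zero (i.e. the Z-component g_Z of g = (g_X, g_Z) vanishes). Then there exists an object Y′ of 𝒟 and a distinguished triangle Y′ → X →g_X Z → Y′[1] such that Y ≅ Y′ ⊕ Z. -/

import Mathlib

open CategoryTheory CategoryTheory.Limits CategoryTheory.Pretriangulated

universe v u

/-- Let `Y → X ⊞ Z →g Z → Y⟦1⟧` be a distinguished triangle in a
pretriangulated category with finite biproducts such that the `Z`-component of `g`
vanishes, i.e. `biprod.inr ≫ g = 0`.  Then there exists an object `Y'` and a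
distinguished triangle `Y' → X →(biprod.inl ≫ g) Z → Y'⟦1⟧` such that `Y ≅ Y' ⊞ Z`. -/
theorem stmt_1 {C : Type u} [Category.{v} C] [Preadditive C] [HasZeroObject C]
    [HasShift C ℤ] [∀ n : ℤ, (shiftFunctor C n).Additive] [Pretriangulated C]
    [HasBinaryBiproducts C]
    (Y X Z : C) (f : Y ⟶ X ⊞ Z) (g : X ⊞ Z ⟶ Z) (h : Z ⟶ Y⟦(1 : ℤ)⟧)
    (hT : Triangle.mk f g h ∈ distTriang C)
    (hgZ : biprod.inr ≫ g = 0) :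
    ∃ (Y' : C) (a : Y' ⟶ X) (w : Z ⟶ Y'⟦(1 : ℤ)⟧),
      (Triangle.mk a (biprod.inl ≫ g) w ∈ distTriang C) ∧ Nonempty (Y ≅ Y' ⊞ Z) := by
  obtain ⟨Y', a, w, hT'⟩ := distinguished_cocone_triangle₁ (biprod.inl ≫ g)
  refine ⟨Y', a, w, hT', ?_⟩
  set Tfam : Bool → Triangle C :=
    fun b => b.rec (Triangle.mk a (biprod.inl ≫ g) w) (contractibleTriangle Z) with hTfam
  have hfam : ∀ b, Tfam b ∈ distTriang C := by
    rintro (_ | _)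
    · exact hT'
    · exact contractible_distinguished Z
  have hprod := productTriangle_distinguished Tfam hfam
  let e₂ : (productTriangle Tfam).obj₂ ≅ X ⊞ Z :=
    { hom := biprod.lift (Pi.π _ false) (Pi.π _ true)
      inv := Pi.lift (fun b => b.rec biprod.fst biprod.snd)
      hom_inv_id := by
        apply limit.hom_ext; rintro ⟨(_ | _)⟩
        · erw [Category.assoc, limit.lift_π, Fan.mk_π_app, Category.id_comp]
          exact biprod.lift_fst _ _
        · erw [Category.assoc, limit.lift_π, Fan.mk_π_app, Category.id_comp]
          exact biprod.lift_snd _ _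
      inv_hom_id := by
        apply biprod.hom_ext
        · erw [Category.assoc, biprod.lift_fst, limit.lift_π]; exact (Category.id_comp _).symm
        · erw [Category.assoc, biprod.lift_snd, limit.lift_π]; exact (Category.id_comp _).symm }
  let e₃ : (productTriangle Tfam).obj₃ ≅ Z :=
    { hom := Pi.π _ false
      inv := Pi.lift (fun b => b.rec (𝟙 Z) 0)
      hom_inv_id := by
        apply limit.hom_ext; rintro ⟨(_ | _)⟩
        · erw [Category.assoc, limit.lift_π, Fan.mk_π_app, Category.id_comp]
          exact Category.comp_id _
        · exact (isZero_zero C).eq_of_tgt _ _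
      inv_hom_id := by erw [limit.lift_π]; rfl }
  have hg : g = biprod.fst ≫ biprod.inl ≫ g := by
    apply biprod.hom_ext' <;> simp [hgZ]
  have square : (productTriangle Tfam).mor₂ ≫ e₃.hom = e₂.hom ≫ g := by
    dsimp [e₂, e₃]
    rw [hg]
    simp only [productTriangle_mor₂, limMap_π, Discrete.natTrans_app, biprod.lift_fst_assoc,
      Category.assoc]
    erw [limMap_π, biprod.lift_fst_assoc]
    rfl
  obtain ⟨e₁, he₁, he₂⟩ := complete_distinguished_triangle_morphism₁ _ _ hprod hT
    e₂.hom e₃.hom square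
  let φ : productTriangle Tfam ⟶ Triangle.mk f g h :=
    { hom₁ := e₁, hom₂ := e₂.hom, hom₃ := e₃.hom,
      comm₁ := he₁, comm₂ := square, comm₃ := he₂ }
  have h₂ : IsIso φ.hom₂ := e₂.isIso_hom
  have h₃ : IsIso φ.hom₃ := e₃.isIso_hom
  have h₁ : IsIso e₁ := isIso₁_of_isIso₂₃ φ hprod hT h₂ h₃
  let e₀ : (productTriangle Tfam).obj₁ ≅ Y' ⊞ Z :=
    { hom := biprod.lift (Pi.π _ false) (Pi.π _ true)
      inv := Pi.lift (fun b => b.rec biprod.fst biprod.snd)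
      hom_inv_id := by
        apply limit.hom_ext; rintro ⟨(_ | _)⟩
        · erw [Category.assoc, limit.lift_π, Fan.mk_π_app, Category.id_comp]
          exact biprod.lift_fst _ _
        · erw [Category.assoc, limit.lift_π, Fan.mk_π_app, Category.id_comp]
          exact biprod.lift_snd _ _
      inv_hom_id := by
        apply biprod.hom_ext
        · erw [Category.assoc, biprod.lift_fst, limit.lift_π]; exact (Category.id_comp _).symm
        · erw [Category.assoc, biprod.lift_snd, limit.lift_π]; exact (Category.id_comp _).symm }
  exact ⟨(asIso e₁).symm ≪≫ e₀⟩
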